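/- Let 1 ≤ i ≤ n−1 and let w be a word in {1,…,n} that is an almost highest weight vector with defect i, meaning ε_j(w) = δ_{ij} for all 1 ≤ j ≤ n−1 and, in case i > 1, also ε_{i−1}(e_i(w)) = 0. Then e_i(w) is either an A_{n−1} highest weight vector or an almost highest weight vector with defect i+1 (the latter only possible when i+1 ≤ n−1). -/
import Mathlib


namespace CrystalWords

/-- One step of the parenthesis-matching scan for the letters `i` (closing
parenthesis) and `i+1` (opening parenthesis).  The state `(p, q)` records the
number of unmatched closing resp. opening parentheses seen so far. -/
def bstep (i : ℕ) (pq : ℕ × ℕ) (a : ℕ) : ℕ × ℕ :=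
  if a = i then (if 0 < pq.2 then (pq.1, pq.2 - 1) else (pq.1 + 1, pq.2))
  else if a = i + 1 then (pq.1, pq.2 + 1)
  else pq

/-- `φ_i` of a word: the number `p` of unmatched letters `i` after cancellation. -/
def phiWord (i : ℕ) (w : List ℕ) : ℕ := (w.foldl (bstep i) (0, 0)).1

/-- `ε_i` of a word: the number `q` of unmatched letters `i+1` after cancellation. -/
def epsWord (i : ℕ) (w : List ℕ) : ℕ := (w.foldl (bstep i) (0, 0)).2

/-- The raising operator `e_i` on words: it changes the leftmost unmatched
letter `i+1` into an `i`, and is undefined when `ε_i = 0`. -/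
def eWord (i : ℕ) : List ℕ → Option (List ℕ)
  | [] => none
  | a :: w =>
      if a = i + 1 ∧ phiWord i w = 0 then some (i :: w)
      else (eWord i w).map (a :: ·)

/-- The lowering operator `f_i` on words: it changes the rightmost unmatched
letter `i` into an `i+1`, and is undefined when `φ_i = 0`. -/
def fWord (i : ℕ) : List ℕ → Option (List ℕ)
  | [] => none
  | a :: w =>
      if (if a = i + 1 then 1 else 0) < phiWord i w then (fWord i w).map (a :: ·)
      else if a = i then some ((i + 1) :: w) else none

/-- A word is an `A_{n-1}` highest weight vector when all `ε_j` vanish. -/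
def IsHW (n : ℕ) (w : List ℕ) : Prop := ∀ j, 1 ≤ j → j ≤ n - 1 → epsWord j w = 0


/-- A word `w` over `{1,…,n}` is an almost highest weight vector with defect `i`
(`1 ≤ i ≤ n-1`): `ε_j(w) = δ_{ij}` for all `1 ≤ j ≤ n-1`, and in case `i > 1`
moreover `ε_{i-1}(e_i(w)) = 0`. -/
def IsAlmostHW (n i : ℕ) (w : List ℕ) : Prop :=
  1 ≤ i ∧ i ≤ n - 1 ∧
  (∀ j, 1 ≤ j → j ≤ n - 1 → epsWord j w = if j = i then 1 else 0) ∧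
  (1 < i → ∀ w', eWord i w = some w' → epsWord (i - 1) w' = 0)

lemma run_eq (i : ℕ) (w : List ℕ) : ∀ p q : ℕ,
    w.foldl (bstep i) (p, q) =
      (p + (phiWord i w - q), epsWord i w + (q - phiWord i w)) := by
  induction w with
  | nil => intro p q; simp [phiWord, epsWord]
  | cons a w ih =>
    intro p q
    have hφ : phiWord i (a :: w) = (w.foldl (bstep i) (bstep i (0,0) a)).1 := rfl
    have hε : epsWord i (a :: w) = (w.foldl (bstep i) (bstep i (0,0) a)).2 := rfl
    have hstep : (a :: w).foldl (bstep i) (p, q) = w.foldl (bstep i) (bstep i (p,q) a) := rfl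
    rw [hstep, hφ, hε]
    by_cases h1 : a = i
    · by_cases h2 : 0 < q
      · have e1 : bstep i (p, q) a = (p, q - 1) := by simp [bstep, h1, h2]
        have e2 : bstep i ((0 : ℕ), (0 : ℕ)) a = (1, 0) := by simp [bstep, h1]
        rw [e1, e2, ih, ih]
        simp only [Prod.mk.injEq]
        omega
      · have e1 : bstep i (p, q) a = (p + 1, q) := by simp [bstep, h1, h2]
        have e2 : bstep i ((0 : ℕ), (0 : ℕ)) a = (1, 0) := by simp [bstep, h1]
        rw [e1, e2, ih, ih]
        simp only [Prod.mk.injEq]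
        omega
    · by_cases h3 : a = i + 1
      · have e1 : bstep i (p, q) a = (p, q + 1) := by simp [bstep, h1, h3]
        have e2 : bstep i ((0 : ℕ), (0 : ℕ)) a = (0, 1) := by simp [bstep, h1, h3]
        rw [e1, e2, ih, ih]
        simp only [Prod.mk.injEq]
        omega
      · have e1 : bstep i (p, q) a = (p, q) := by simp [bstep, h1, h3]
        have e2 : bstep i ((0 : ℕ), (0 : ℕ)) a = (0, 0) := by simp [bstep, h1, h3]
        rw [e1, e2, ih, ih]
        simp only [Prod.mk.injEq]
        omega

lemma eps_append (j : ℕ) (u v : List ℕ) :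
    epsWord j (u ++ v) = epsWord j v + (epsWord j u - phiWord j v) := by
  have h0 : u.foldl (bstep j) (0, 0) = (phiWord j u, epsWord j u) := by
    rw [run_eq]; simp
  have : (u ++ v).foldl (bstep j) (0, 0)
      = v.foldl (bstep j) (phiWord j u, epsWord j u) := by
    rw [List.foldl_append, h0]
  rw [epsWord, this, run_eq]

lemma phi_append (j : ℕ) (u v : List ℕ) :
    phiWord j (u ++ v) = phiWord j u + (phiWord j v - epsWord j u) := by
  have h0 : u.foldl (bstep j) (0, 0) = (phiWord j u, epsWord j u) := by
    rw [run_eq]; simp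
  have : (u ++ v).foldl (bstep j) (0, 0)
      = v.foldl (bstep j) (phiWord j u, epsWord j u) := by
    rw [List.foldl_append, h0]
  rw [phiWord, this, run_eq]

lemma eps_cons_close (j : ℕ) (v : List ℕ) : epsWord j (j :: v) = epsWord j v := by
  have : (j :: v).foldl (bstep j) (0, 0) = v.foldl (bstep j) (1, 0) := by
    simp [List.foldl_cons, bstep]
  rw [epsWord, this, run_eq]
  simp

lemma phi_cons_close (j : ℕ) (v : List ℕ) : phiWord j (j :: v) = phiWord j v + 1 := by
  have : (j :: v).foldl (bstep j) (0, 0) = v.foldl (bstep j) (1, 0) := by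
    simp [List.foldl_cons, bstep]
  rw [phiWord, this, run_eq]
  simp; omega

lemma eps_cons_open (j : ℕ) (v : List ℕ) :
    epsWord j ((j + 1) :: v) = epsWord j v + (1 - phiWord j v) := by
  have : ((j + 1) :: v).foldl (bstep j) (0, 0) = v.foldl (bstep j) (0, 1) := by
    simp [List.foldl_cons, bstep]
  rw [epsWord, this, run_eq]

lemma phi_cons_open (j : ℕ) (v : List ℕ) :
    phiWord j ((j + 1) :: v) = phiWord j v - 1 := by
  have : ((j + 1) :: v).foldl (bstep j) (0, 0) = v.foldl (bstep j) (0, 1) := by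
    simp [List.foldl_cons, bstep]
  rw [phiWord, this, run_eq]
  simp

lemma eps_cons_other {j a : ℕ} (h1 : a ≠ j) (h2 : a ≠ j + 1) (v : List ℕ) :
    epsWord j (a :: v) = epsWord j v := by
  have : (a :: v).foldl (bstep j) (0, 0) = v.foldl (bstep j) (0, 0) := by
    simp [List.foldl_cons, bstep, h1, h2]
  rw [epsWord, this, epsWord]

lemma phi_cons_other {j a : ℕ} (h1 : a ≠ j) (h2 : a ≠ j + 1) (v : List ℕ) :
    phiWord j (a :: v) = phiWord j v := by
  have : (a :: v).foldl (bstep j) (0, 0) = v.foldl (bstep j) (0, 0) := by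
    simp [List.foldl_cons, bstep, h1, h2]
  rw [phiWord, this, phiWord]

lemma eWord_some (j : ℕ) : ∀ w w' : List ℕ, eWord j w = some w' →
    ∃ u v, w = u ++ (j + 1) :: v ∧ w' = u ++ j :: v ∧ phiWord j v = 0 := by
  intro w
  induction w with
  | nil => intro w' h; simp [eWord] at h
  | cons a w ih =>
    intro w' h
    rw [eWord] at h
    split_ifs at h with hc
    · refine ⟨[], w, by simp [hc.1], ?_, hc.2⟩
      simp only [Option.some.injEq] at h
      simp [h.symm]
    · obtain ⟨w₀, hw₀, rfl⟩ := Option.map_eq_some_iff.mp h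
      obtain ⟨u, v, rfl, rfl, hv⟩ := ih w₀ hw₀
      exact ⟨a :: u, v, rfl, rfl, hv⟩

lemma eps_zero_of_no_open {j : ℕ} {w : List ℕ} (h : ∀ a ∈ w, a ≠ j + 1) :
    epsWord j w = 0 := by
  induction w with
  | nil => simp [epsWord]
  | cons a w ih =>
    have ha : a ≠ j + 1 := h a (by simp)
    have ih' : epsWord j w = 0 := ih fun b hb => h b (by simp [hb])
    by_cases haj : a = j
    · subst haj; rw [eps_cons_close, ih']
    · rw [eps_cons_other haj ha, ih']

/-- Let `w` be an almost highest weight vector with defect `i`.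
Then `e_i(w)` is either an `A_{n-1}` highest weight vector or an almost highest
weight vector with defect `i+1` (the latter being possible only when
`i + 1 ≤ n - 1`, which is part of `IsAlmostHW`). -/
theorem almost_highest_weight (n i : ℕ) (hn : 2 ≤ n) (w : List ℕ)
    (hw : ∀ a ∈ w, 1 ≤ a ∧ a ≤ n) (h : IsAlmostHW n i w) :
    ∀ w', eWord i w = some w' → IsHW n w' ∨ IsAlmostHW n (i + 1) w' := by
  intro w' hw'
  obtain ⟨h1, h2, h3, h4⟩ := h
  obtain ⟨u, v, hwdec, hw'dec, hφv⟩ := eWord_some i w w' hw'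
  have hεw : epsWord i w = 1 := by simpa using h3 i h1 h2
  have keyi : epsWord i u = 0 ∧ epsWord i v = 0 := by
    rw [hwdec, eps_append, eps_cons_open, phi_cons_open, hφv] at hεw
    omega
  have hεi' : epsWord i w' = 0 := by
    rw [hw'dec, eps_append, eps_cons_close]
    omega
  have hother : ∀ j, 1 ≤ j → j ≠ i - 1 → j ≠ i → j ≠ i + 1 →
      epsWord j w' = epsWord j w := by
    intro j hj1 hj2 hj3 hj4
    rw [hwdec, hw'dec, eps_append, eps_append,
        eps_cons_other (show i ≠ j by omega) (show i ≠ j + 1 by omega),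
        eps_cons_other (show i + 1 ≠ j by omega) (show i + 1 ≠ j + 1 by omega),
        phi_cons_other (show i ≠ j by omega) (show i ≠ j + 1 by omega),
        phi_cons_other (show i + 1 ≠ j by omega) (show i + 1 ≠ j + 1 by omega)]
  have him1 : 1 < i → epsWord (i - 1) w' = 0 := fun hi => h4 hi w' hw'
  by_cases hcase : epsWord (i + 1) w' = 0
  · left
    intro j hj1 hj2
    rcases eq_or_ne j i with rfl | hji
    · exact hεi'
    rcases eq_or_ne j (i + 1) with rfl | hji1
    · exact hcase
    rcases eq_or_ne j (i - 1) with rfl | hjim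
    · exact him1 (by omega)
    · rw [hother j hj1 hjim hji hji1]
      have := h3 j hj1 hj2
      simpa [hji] using this
  · right
    have hin : i + 1 ≤ n - 1 := by
      by_contra hni
      apply hcase
      apply eps_zero_of_no_open
      intro a ha
      have han : a ≤ n := by
        rw [hw'dec] at ha
        rcases List.mem_append.mp ha with hmem | hmem
        · exact (hw a (by rw [hwdec]; exact List.mem_append_left _ hmem)).2
        · rcases List.mem_cons.mp hmem with rfl | hmem
          · omega
          · exact (hw a (by rw [hwdec]; simp [hmem])).2
      omega
    have hεw1 : epsWord (i + 1) w = 0 := by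
      have := h3 (i + 1) (by omega) hin
      simpa using this
    have key1 : epsWord (i + 1) v = 0 ∧
        epsWord (i + 1) u ≤ phiWord (i + 1) v + 1 := by
      rw [hwdec, eps_append, eps_cons_close, phi_cons_close] at hεw1
      omega
    have hval : epsWord (i + 1) w' = epsWord (i + 1) u - phiWord (i + 1) v := by
      rw [hw'dec, eps_append,
          eps_cons_other (show i ≠ i + 1 by omega) (show i ≠ i + 1 + 1 by omega),
          phi_cons_other (show i ≠ i + 1 by omega) (show i ≠ i + 1 + 1 by omega)]
      omega
    have hB : epsWord (i + 1) w' = 1 := by omega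
    refine ⟨by omega, hin, ?_, ?_⟩
    · intro j hj1 hj2
      rcases eq_or_ne j (i + 1) with rfl | hji1
      · rw [if_pos rfl]; exact hB
      rcases eq_or_ne j i with rfl | hji
      · simpa [hji1] using hεi'
      rcases eq_or_ne j (i - 1) with rfl | hjim
      · rw [if_neg hji1]
        exact him1 (by omega)
      · rw [hother j hj1 hjim hji hji1, h3 j hj1 hj2, if_neg hji, if_neg hji1]
    · intro _ w'' hw''
      obtain ⟨u', v', hd1, hd2, hφv'⟩ := eWord_some (i + 1) w' w'' hw''
      have heq : u ++ i :: v = u' ++ (i + 1 + 1) :: v' := by rw [← hw'dec, hd1]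
      have hred : i + 1 - 1 = i := by omega
      rw [hred]
      rcases List.append_eq_append_iff.mp heq with ⟨m, hm1, hm2⟩ | ⟨m, hm1, hm2⟩
      · -- flip position inside v : contradiction with epsWord (i+1) v = 0
        exfalso
        cases m with
        | nil =>
          simp only [List.nil_append] at hm2
          injection hm2 with hh _
          omega
        | cons b m =>
          simp only [List.cons_append] at hm2
          injection hm2 with hh hv
          have hv1 : epsWord (i + 1) v = 0 := key1.1
          rw [hv, eps_append, eps_cons_open, hφv'] at hv1
          omega
      · -- flip position inside u
        cases m with
        | nil =>
          exfalso
          simp only [List.nil_append] at hm2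
          injection hm2 with hh _
          omega
        | cons b m =>
          simp only [List.cons_append] at hm2
          injection hm2 with hh hv'
          subst hh
          have hεu : epsWord i u = 0 := keyi.1
          rw [hm1, eps_append,
              eps_cons_other (show i + 1 + 1 ≠ i by omega)
                (show i + 1 + 1 ≠ i + 1 by omega),
              phi_cons_other (show i + 1 + 1 ≠ i by omega)
                (show i + 1 + 1 ≠ i + 1 by omega)] at hεu
          rw [hd2, hv', eps_append, eps_cons_open, phi_cons_open,
              eps_append, eps_cons_close, phi_append, phi_cons_close]
          omega

end CrystalWords
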